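/- arXiv:2410.17700 — 2 statements merged into one kernel-verified Lean document; each statement's English description precedes it below -/
import Mathlib

section
/- Stick-breaking weights sum to one almost surely: let α > 0 and let (v_k)_{k∈ℕ} be an i.i.d. sequence of Beta(1, α)-distributed random variables on a probability space. Define π_k = v_k · ∏_{j=1}^{k−1} (1 − v_j). Then almost surely ∑_{k=1}^{∞} π_k = 1; equivalently, ∏_{j=1}^{K} (1 − v_j) → 0 almost surely as K → ∞. Hence the stick-breaking (GEM) construction almost surely defines a probability vector. -/
open MeasureTheory Filter

/-- The Beta(a, b) distribution on `[0,1]`: the measure with density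
`x ↦ x^(a−1) (1−x)^(b−1) / B(a,b)` w.r.t. Lebesgue measure, where
`B(a,b) = Γ(a)Γ(b)/Γ(a+b)`. -/
noncomputable def betaMeasure (a b : ℝ) : Measure ℝ :=
  volume.withDensity fun x =>
    ENNReal.ofReal (if x ∈ Set.Icc (0 : ℝ) 1 then
      x ^ (a - 1) * (1 - x) ^ (b - 1) / (Real.Gamma a * Real.Gamma b / Real.Gamma (a + b))
    else 0)

/-- Stick-breaking weights sum to one almost surely: if `(v_k)` is an
i.i.d. sequence of `Beta(1, α)` random variables (`α > 0`) and
`π_k = v_k ∏_{j<k} (1 − v_j)`, then almost surely `∑_k π_k = 1`; equivalently,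
`∏_{j<K} (1 − v_j) → 0` almost surely as `K → ∞`. -/
theorem stmt_12 (α : ℝ) (hα : 0 < α)
    (Ω : Type*) [MeasurableSpace Ω] (ℙ : Measure Ω) [IsProbabilityMeasure ℙ]
    (v : ℕ → Ω → ℝ) (hmeas : ∀ k, Measurable (v k))
    (hindep : ProbabilityTheory.iIndepFun v ℙ)
    (hdist : ∀ k, Measure.map (v k) ℙ = betaMeasure 1 α) :
    ∀ᵐ ω ∂ℙ,
      HasSum (fun k => v k ω * ∏ j ∈ Finset.range k, (1 - v j ω)) 1 ∧
        Tendsto (fun K => ∏ j ∈ Finset.range K, (1 - v j ω)) atTop (nhds 0) := by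
  set μ := betaMeasure 1 α with hμ
  have hprob : IsProbabilityMeasure μ := by
    rw [← hdist 0]; exact Measure.isProbabilityMeasure_map (hmeas 0).aemeasurable
  -- the complement of [0,1] is null for μ
  have hcompl : μ (Set.Icc (0:ℝ) 1)ᶜ = 0 := by
    rw [hμ, betaMeasure, withDensity_apply _ (measurableSet_Icc.compl)]
    rw [setLIntegral_congr_fun measurableSet_Icc.compl
      ((fun x hx => by
        simp [Set.mem_compl_iff] at hx
        rw [if_neg (by simpa using hx), ENNReal.ofReal_zero]))]
    simp
  -- μ (Iic 0) = 0
  have hIic : μ (Set.Iic (0:ℝ)) = 0 := by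
    rw [hμ, betaMeasure, withDensity_apply _ measurableSet_Iic]
    have h0 : (volume.restrict (Set.Iic (0:ℝ))) {(0:ℝ)} = 0 := by
      rw [Measure.restrict_apply (measurableSet_singleton _)]
      exact le_antisymm (le_trans (measure_mono Set.inter_subset_left) (by simp)) (zero_le)
    have hae : ∀ᵐ x ∂(volume.restrict (Set.Iic (0:ℝ))),
        ENNReal.ofReal (if x ∈ Set.Icc (0:ℝ) 1 then
          x ^ ((1:ℝ) - 1) * (1 - x) ^ (α - 1) / (Real.Gamma 1 * Real.Gamma α / Real.Gamma (1 + α))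
          else 0) = 0 := by
      filter_upwards [ae_restrict_mem measurableSet_Iic,
        measure_eq_zero_iff_ae_notMem.mp h0] with x hx hx0
      have : x < 0 := lt_of_le_of_ne hx (by simpa using hx0)
      rw [if_neg (fun h => absurd h.1 (not_le.mpr this)), ENNReal.ofReal_zero]
    rw [lintegral_congr_ae hae, lintegral_zero]
  have hμIcc : ∀ᵐ x ∂μ, x ∈ Set.Icc (0:ℝ) 1 := by
    have hs : {x : ℝ | ¬ x ∈ Set.Icc (0:ℝ) 1} = (Set.Icc (0:ℝ) 1)ᶜ := rfl
    rw [ae_iff, hs]; exact hcompl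
  have hμpos : ∀ᵐ x ∂μ, 0 < x := by
    have hs : {x : ℝ | ¬ (0:ℝ) < x} = Set.Iic 0 := by ext x; simp
    rw [ae_iff, hs]; exact hIic
  -- the constant c
  set c : ENNReal := ∫⁻ x, ENNReal.ofReal (1 - x) ∂μ with hc
  have hcmeas : Measurable fun x : ℝ => ENNReal.ofReal (1 - x) :=
    (measurable_const.sub measurable_id).ennreal_ofReal
  have hcle : c ≤ 1 := by
    calc c ≤ ∫⁻ _, 1 ∂μ := by
            refine lintegral_mono_ae ?_
            filter_upwards [hμIcc] with x hx
            exact ENNReal.ofReal_le_one.mpr (by linarith [hx.1])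
      _ = 1 := by simp
  have hclt : c < 1 := by
    rcases lt_or_eq_of_le hcle with h | h
    · exact h
    exfalso
    have hsub : ∫⁻ x, (1 - ENNReal.ofReal (1 - x)) ∂μ = 0 := by
      rw [lintegral_sub hcmeas (by rw [← hc, h]; exact ENNReal.one_ne_top)
        (Filter.Eventually.mono hμIcc fun x hx =>
          ENNReal.ofReal_le_one.mpr (by linarith [hx.1]))]
      rw [lintegral_one, measure_univ, ← hc, h, tsub_self]
    have := (lintegral_eq_zero_iff (measurable_const.sub hcmeas)).mp hsub
    have hbad : ∀ᵐ x ∂μ, False := by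
      filter_upwards [this, hμpos] with x hx hxpos
      simp only [Pi.zero_apply, Pi.sub_apply, tsub_eq_zero_iff_le] at hx
      have : (1:ℝ) ≤ 1 - x := ENNReal.one_le_ofReal.mp hx
      linarith
    exact (ae_neBot.mpr (IsProbabilityMeasure.ne_zero μ)).ne
      (eventually_false_iff_eq_bot.mp hbad)
  -- the ENNReal-valued factors
  set g : ℕ → Ω → ENNReal := fun k ω => ENNReal.ofReal (1 - v k ω) with hg
  have hgmeas : ∀ k, Measurable (g k) := fun k => hcmeas.comp (hmeas k)
  have hgindep : ProbabilityTheory.iIndepFun g ℙ :=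
    hindep.comp (fun _ x => ENNReal.ofReal (1 - x)) (fun _ => hcmeas)
  have hgint : ∀ k, ∫⁻ ω, g k ω ∂ℙ = c := by
    intro k
    rw [hc, ← hdist k, lintegral_map hcmeas (hmeas k)]
  have hprodint : ∀ K, ∫⁻ ω, ∏ j ∈ Finset.range K, g j ω ∂ℙ = c ^ K := by
    intro K
    induction K with
    | zero => simp
    | succ n ih =>
      have hind := hgindep.indepFun_prod_range_succ hgmeas n
      have := ProbabilityTheory.lintegral_mul_eq_lintegral_mul_lintegral_of_indepFun
        (f := ∏ j ∈ Finset.range n, g j) (g := g n)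
        (by rw [Finset.prod_fn]; exact Finset.measurable_prod _ (fun i _ => hgmeas i))
        (hgmeas n) hind
      simp only [Finset.prod_range_succ]
      calc ∫⁻ ω, (∏ j ∈ Finset.range n, g j ω) * g n ω ∂ℙ
          = ∫⁻ ω, (∏ j ∈ Finset.range n, g j) ω * g n ω ∂ℙ := by
            simp [Finset.prod_apply]
        _ = (∫⁻ ω, (∏ j ∈ Finset.range n, g j) ω ∂ℙ) * ∫⁻ ω, g n ω ∂ℙ := this
        _ = c ^ n * c := by
            rw [hgint n, ← ih]; congr 1; exact lintegral_congr fun ω => by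
              simp [Finset.prod_apply]
        _ = c ^ (n + 1) := by ring
  -- the infimum of the products is a.e. zero
  have hGmeas : Measurable fun ω => ⨅ K, ∏ j ∈ Finset.range K, g j ω :=
    Measurable.iInf fun K => Finset.measurable_prod _ (fun i _ => hgmeas i)
  have hGzero : ∫⁻ ω, ⨅ K, ∏ j ∈ Finset.range K, g j ω ∂ℙ = 0 := by
    refine le_antisymm ?_ (zero_le)
    refine ge_of_tendsto' (ENNReal.tendsto_pow_atTop_nhds_zero_of_lt_one hclt) fun K => ?_
    rw [← hprodint K]
    exact lintegral_mono fun ω => iInf_le _ K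
  have hGae : ∀ᵐ ω ∂ℙ, (⨅ K, ∏ j ∈ Finset.range K, g j ω) = 0 := by
    have := (lintegral_eq_zero_iff hGmeas).mp hGzero
    filter_upwards [this] with ω hω using hω
  -- a.e. each v k ∈ [0,1]
  have hvIcc : ∀ᵐ ω ∂ℙ, ∀ k, v k ω ∈ Set.Icc (0:ℝ) 1 := by
    rw [ae_all_iff]
    intro k
    have : ℙ ((v k) ⁻¹' (Set.Icc (0:ℝ) 1)ᶜ) = 0 := by
      rw [← Measure.map_apply (hmeas k) measurableSet_Icc.compl, hdist k]
      exact hcompl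
    have hs : {ω | ¬ v k ω ∈ Set.Icc (0:ℝ) 1} = (v k) ⁻¹' (Set.Icc (0:ℝ) 1)ᶜ := rfl
    rw [ae_iff, hs]; exact this
  -- conclusion
  filter_upwards [hGae, hvIcc] with ω hG hv
  have hfac : ∀ j, (0:ℝ) ≤ 1 - v j ω ∧ 1 - v j ω ≤ 1 := fun j =>
    ⟨by linarith [(hv j).2], by linarith [(hv j).1]⟩
  have hPrepr : ∀ K, ENNReal.ofReal (∏ j ∈ Finset.range K, (1 - v j ω))
      = ∏ j ∈ Finset.range K, g j ω := fun K =>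
    ENNReal.ofReal_prod_of_nonneg fun j _ => (hfac j).1
  have hanti : Antitone fun K => ∏ j ∈ Finset.range K, g j ω := by
    refine antitone_nat_of_succ_le fun n => ?_
    rw [Finset.prod_range_succ]
    calc (∏ j ∈ Finset.range n, g j ω) * g n ω
        ≤ (∏ j ∈ Finset.range n, g j ω) * 1 :=
          mul_le_mul_right (ENNReal.ofReal_le_one.mpr (hfac n).2) _
      _ = ∏ j ∈ Finset.range n, g j ω := mul_one _
  have htendE : Tendsto (fun K => ∏ j ∈ Finset.range K, g j ω) atTop (nhds 0) := by
    have := tendsto_atTop_iInf hanti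
    rwa [hG] at this
  have hPnonneg : ∀ K, (0:ℝ) ≤ ∏ j ∈ Finset.range K, (1 - v j ω) := fun K =>
    Finset.prod_nonneg fun j _ => (hfac j).1
  have htend : Tendsto (fun K => ∏ j ∈ Finset.range K, (1 - v j ω)) atTop (nhds 0) := by
    have h2 : Tendsto (fun K => (∏ j ∈ Finset.range K, g j ω).toReal) atTop
        (nhds ((0:ENNReal).toReal)) :=
      (ENNReal.tendsto_toReal (by simp)).comp htendE
    simp only [ENNReal.toReal_zero] at h2
    refine h2.congr fun K => ?_
    rw [← hPrepr K, ENNReal.toReal_ofReal (hPnonneg K)]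
  refine ⟨?_, htend⟩
  have hpartial : ∀ K, ∑ k ∈ Finset.range K, v k ω * ∏ j ∈ Finset.range k, (1 - v j ω)
      = 1 - ∏ j ∈ Finset.range K, (1 - v j ω) := by
    intro K
    induction K with
    | zero => simp
    | succ n ih =>
      rw [Finset.sum_range_succ, Finset.prod_range_succ, ih]; ring
  rw [hasSum_iff_tendsto_nat_of_nonneg
    (fun k => mul_nonneg (hv k).1 (hPnonneg k))]
  have : Tendsto (fun K => 1 - ∏ j ∈ Finset.range K, (1 - v j ω)) atTop (nhds (1 - 0)) :=
    tendsto_const_nhds.sub htend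
  simp only [sub_zero] at this
  exact this.congr fun K => (hpartial K).symm
end

section
/- Logarithmic moment of the Beta distribution: for a, b > 0, ∫_{0}^{1} log(x) dBeta(a, b)(x) = ψ(a) − ψ(a + b), where ψ denotes the digamma function, i.e., ψ(t) is the derivative at t of the function t ↦ log Γ(t) (Γ being the real Gamma function). -/
open MeasureTheory intervalIntegral Set

lemma beta_integrable {c d : ℝ} (hc : 0 < c) (hd : 0 < d) :
    IntervalIntegrable (fun x : ℝ => x ^ (c - 1) * (1 - x) ^ (d - 1)) volume 0 1 := by
  have h := (Complex.betaIntegral_convergent (u := (c : ℂ)) (v := (d : ℂ))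
    (by simpa using hc) (by simpa using hd)).norm
  rw [intervalIntegrable_iff] at h ⊢
  refine h.congr_fun ?_ measurableSet_uIoc
  intro x hx
  rw [Set.uIoc_of_le zero_le_one] at hx
  have hx0 : (0 : ℝ) < x := hx.1
  have h1x : (0 : ℝ) ≤ 1 - x := by linarith [hx.2]
  show ‖(x:ℂ) ^ ((c:ℂ) - 1) * ((1:ℂ) - (x:ℂ)) ^ ((d:ℂ) - 1)‖ = x ^ (c - 1) * (1 - x) ^ (d - 1)
  rw [norm_mul]
  congr 1
  · rw [Complex.norm_cpow_eq_rpow_re_of_pos hx0]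
    norm_num
  · by_cases hd1 : d = 1
    · subst hd1; norm_num
    · have : ((1 : ℂ) - (x : ℂ)) = ((1 - x : ℝ) : ℂ) := by push_cast; ring
      rw [this, Complex.norm_cpow_eq_rpow_re_of_nonneg h1x
        (by simpa using sub_ne_zero.mpr hd1)]
      norm_num

lemma beta_eval {c d : ℝ} (hc : 0 < c) (hd : 0 < d) :
    ∫ x in (0:ℝ)..1, x ^ (c - 1) * (1 - x) ^ (d - 1)
      = Real.Gamma c * Real.Gamma d / Real.Gamma (c + d) := by
  have key := Complex.Gamma_mul_Gamma_eq_betaIntegral (s := (c : ℂ)) (t := (d : ℂ))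
    (by simpa using hc) (by simpa using hd)
  have hbeta : Complex.betaIntegral (c : ℂ) (d : ℂ)
      = ((∫ x in (0:ℝ)..1, x ^ (c - 1) * (1 - x) ^ (d - 1) : ℝ) : ℂ) := by
    rw [Complex.betaIntegral, ← intervalIntegral.integral_ofReal]
    refine intervalIntegral.integral_congr fun x hx => ?_
    rw [Set.uIcc_of_le zero_le_one] at hx
    have h1 : (x : ℂ) ^ ((c : ℂ) - 1) = ((x ^ (c - 1) : ℝ) : ℂ) := by
      rw [show ((c:ℂ) - 1) = ((c - 1 : ℝ) : ℂ) by push_cast; ring]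
      exact (Complex.ofReal_cpow hx.1 _).symm
    have h2 : ((1 : ℂ) - (x : ℂ)) ^ ((d : ℂ) - 1) = (((1 - x) ^ (d - 1) : ℝ) : ℂ) := by
      rw [show ((1:ℂ) - (x:ℂ)) = ((1 - x : ℝ) : ℂ) by push_cast; ring,
        show ((d:ℂ) - 1) = ((d - 1 : ℝ) : ℂ) by push_cast; ring]
      exact (Complex.ofReal_cpow (by linarith [hx.2]) _).symm
    rw [h1, h2]
    push_cast
    ring
  rw [hbeta, Complex.Gamma_ofReal, Complex.Gamma_ofReal,
    show (c : ℂ) + (d : ℂ) = ((c + d : ℝ) : ℂ) by push_cast; ring, Complex.Gamma_ofReal,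
    ← Complex.ofReal_mul, ← Complex.ofReal_mul] at key
  have key' := Complex.ofReal_injective key
  have hΓ : Real.Gamma (c + d) ≠ 0 := (Real.Gamma_pos_of_pos (by linarith)).ne'
  field_simp
  linarith [key']

lemma beta_hasDeriv {a b : ℝ} (ha : 0 < a) (hb : 0 < b) :
    HasDerivAt (fun s : ℝ => ∫ x in (0:ℝ)..1, x ^ (s - 1) * (1 - x) ^ (b - 1))
      (∫ x in (0:ℝ)..1, Real.log x * (x ^ (a - 1) * (1 - x) ^ (b - 1))) a := by
  have hmeas : ∀ s : ℝ, AEStronglyMeasurable (fun x : ℝ => x ^ (s - 1) * (1 - x) ^ (b - 1))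
      (volume.restrict (Set.uIoc (0:ℝ) 1)) := fun s =>
    (by fun_prop : Measurable fun x : ℝ => x ^ (s - 1) * (1 - x) ^ (b - 1)).aestronglyMeasurable
  have key := intervalIntegral.hasDerivAt_integral_of_dominated_loc_of_deriv_le
    (F := fun (s : ℝ) (x : ℝ) => x ^ (s - 1) * (1 - x) ^ (b - 1))
    (F' := fun (s : ℝ) (x : ℝ) => Real.log x * (x ^ (s - 1) * (1 - x) ^ (b - 1)))
    (x₀ := a) (s := Metric.ball a (a / 4)) (a := 0) (b := 1) (μ := volume)
    (bound := fun x => (4 / a) * (x ^ (a / 2 - 1) * (1 - x) ^ (b - 1)))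
    (Metric.ball_mem_nhds a (by positivity))
    (Filter.Eventually.of_forall fun s => hmeas s)
    (beta_integrable ha hb)
    ((Real.measurable_log.mul
      (by fun_prop : Measurable fun x : ℝ => x ^ (a - 1) * (1 - x) ^ (b - 1))).aestronglyMeasurable)
    ?_ ((beta_integrable (by positivity : (0:ℝ) < a/2) hb).const_mul (4 / a)) ?_
  · exact key.2
  · -- bound
    refine Filter.Eventually.of_forall fun t ht s hs => ?_
    rw [Set.uIoc_of_le zero_le_one] at ht
    have ht0 : (0 : ℝ) < t := ht.1
    have ht1 : t ≤ 1 := ht.2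
    have h1t : (0 : ℝ) ≤ 1 - t := by linarith
    have hs' : a - a / 4 < s := by
      rw [Metric.mem_ball, Real.dist_eq, abs_lt] at hs; linarith [hs.1]
    have hlog : |Real.log t| ≤ (4 / a) * t ^ (-(a / 4)) := by
      rw [abs_of_nonpos (Real.log_nonpos ht0.le ht1)]
      have h1 : Real.log (t ^ (-(a/4))) ≤ t ^ (-(a/4)) := by
        have := Real.add_one_le_exp (Real.log (t ^ (-(a/4))))
        have h2 := Real.log_le_sub_one_of_pos (Real.rpow_pos_of_pos ht0 (-(a/4)))
        linarith
      rw [Real.log_rpow ht0] at h1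
      have : -Real.log t = (4 / a) * ((-(a/4)) * Real.log t) := by field_simp
      rw [this]
      have h4a : (0:ℝ) ≤ 4 / a := by positivity
      exact mul_le_mul_of_nonneg_left h1 h4a
    have hpow : t ^ (s - 1) ≤ t ^ (3 * a / 4 - 1) :=
      Real.rpow_le_rpow_of_exponent_ge ht0 ht1 (by linarith)
    have key : |Real.log t| * t ^ (s - 1) ≤ (4 / a) * t ^ (a / 2 - 1) := by
      calc |Real.log t| * t ^ (s - 1)
          ≤ ((4 / a) * t ^ (-(a / 4))) * t ^ (3 * a / 4 - 1) :=
            mul_le_mul hlog hpow (Real.rpow_nonneg ht0.le _) (by positivity)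
        _ = (4 / a) * (t ^ (-(a / 4)) * t ^ (3 * a / 4 - 1)) := by ring
        _ = (4 / a) * t ^ (a / 2 - 1) := by
            rw [← Real.rpow_add ht0]; ring_nf
    have hnn : (0:ℝ) ≤ (1 - t) ^ (b - 1) := Real.rpow_nonneg h1t _
    calc ‖Real.log t * (t ^ (s - 1) * (1 - t) ^ (b - 1))‖
        = |Real.log t| * t ^ (s - 1) * (1 - t) ^ (b - 1) := by
          rw [Real.norm_eq_abs, abs_mul, abs_mul, abs_of_nonneg (Real.rpow_nonneg ht0.le _),
            abs_of_nonneg hnn, mul_assoc]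
      _ ≤ (4 / a) * t ^ (a / 2 - 1) * (1 - t) ^ (b - 1) :=
          mul_le_mul_of_nonneg_right key hnn
      _ = 4 / a * (t ^ (a / 2 - 1) * (1 - t) ^ (b - 1)) := by ring
  · -- differentiability
    refine Filter.Eventually.of_forall fun t ht s hs => ?_
    rw [Set.uIoc_of_le zero_le_one] at ht
    have ht0 : (0 : ℝ) < t := ht.1
    have h1 : HasDerivAt (fun y : ℝ => t ^ y) (t ^ (s - 1) * Real.log t) (s - 1) :=
      (Real.hasStrictDerivAt_const_rpow ht0 (s - 1)).hasDerivAt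
    have h2 : HasDerivAt (fun y : ℝ => t ^ (y - 1)) (t ^ (s - 1) * Real.log t * 1) s :=
      h1.comp s ((hasDerivAt_id s).sub_const 1)
    have h3 := h2.mul_const ((1 - t) ^ (b - 1))
    convert h3 using 1
    show Real.log t * (t ^ (s - 1) * (1 - t) ^ (b - 1)) = t ^ (s - 1) * Real.log t * 1 * (1 - t) ^ (b - 1)
    ring
    rfl

/-- The digamma function `ψ`, the derivative of `log ∘ Γ`. -/
noncomputable def digamma (t : ℝ) : ℝ :=
  deriv (fun s => Real.log (Real.Gamma s)) t

/-- Logarithmic moment of the Beta distribution: for `a, b > 0`,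
`∫ log x dBeta(a,b)(x) = ψ(a) − ψ(a+b)`. -/
theorem stmt_14 (a b : ℝ) (ha : 0 < a) (hb : 0 < b) :
    ∫ x, Real.log x ∂(betaMeasure a b) = digamma a - digamma (a + b) := by
  have hΓa : 0 < Real.Gamma a := Real.Gamma_pos_of_pos ha
  have hΓb : 0 < Real.Gamma b := Real.Gamma_pos_of_pos hb
  have hΓab : 0 < Real.Gamma (a + b) := Real.Gamma_pos_of_pos (by linarith)
  set B : ℝ := Real.Gamma a * Real.Gamma b / Real.Gamma (a + b) with hBdef
  have hB : 0 < B := by positivity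
  -- the density function
  set ρ : ℝ → ℝ := fun x =>
    if x ∈ Set.Icc (0 : ℝ) 1 then x ^ (a - 1) * (1 - x) ^ (b - 1) / B else 0 with hρdef
  have hρmeas : Measurable ρ := by
    apply Measurable.ite measurableSet_Icc _ measurable_const
    fun_prop
  -- Step 1: unfold withDensity
  have step1 : ∫ x, Real.log x ∂(betaMeasure a b)
      = ∫ x, (ρ x).toNNReal • Real.log x := by
    rw [betaMeasure]
    exact integral_withDensity_eq_integral_smul hρmeas.real_toNNReal _
  -- Step 2: rewrite integrand as an indicator
  have step2 : (fun x => (ρ x).toNNReal • Real.log x)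
      = Set.indicator (Set.Icc (0:ℝ) 1)
          (fun x => B⁻¹ * (Real.log x * (x ^ (a - 1) * (1 - x) ^ (b - 1)))) := by
    funext x
    rw [Set.indicator_apply]
    by_cases hx : x ∈ Set.Icc (0:ℝ) 1
    · have hnn : 0 ≤ x ^ (a - 1) * (1 - x) ^ (b - 1) / B :=
        div_nonneg (mul_nonneg (Real.rpow_nonneg hx.1 _)
          (Real.rpow_nonneg (by linarith [hx.2]) _)) hB.le
      rw [if_pos hx, hρdef]
      simp only [if_pos hx]
      rw [NNReal.smul_def, Real.coe_toNNReal _ hnn, smul_eq_mul]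
      ring
    · rw [if_neg hx, hρdef]
      simp only [if_neg hx]
      simp
  -- Step 3: reduce to an interval integral
  have step3 : ∫ x, Set.indicator (Set.Icc (0:ℝ) 1)
        (fun x => B⁻¹ * (Real.log x * (x ^ (a - 1) * (1 - x) ^ (b - 1)))) x
      = B⁻¹ * ∫ x in (0:ℝ)..1, Real.log x * (x ^ (a - 1) * (1 - x) ^ (b - 1)) := by
    rw [MeasureTheory.integral_indicator measurableSet_Icc, integral_Icc_eq_integral_Ioc,
      ← intervalIntegral.integral_of_le zero_le_one, intervalIntegral.integral_const_mul]
  -- Derivative facts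
  have hdΓ : ∀ {s : ℝ}, 0 < s → HasDerivAt Real.Gamma (deriv Real.Gamma s) s := by
    intro s hs
    refine (Real.differentiableAt_Gamma fun m => ?_).hasDerivAt
    have : (0:ℝ) ≤ m := Nat.cast_nonneg m
    exact ((by linarith : -(m:ℝ) < s)).ne'
  have hGa := hdΓ ha
  have hGab := hdΓ (show (0:ℝ) < a + b by linarith)
  have hcomp : HasDerivAt (fun s : ℝ => Real.Gamma (s + b)) (deriv Real.Gamma (a + b) * 1) a :=
    by have := hGab.comp a ((hasDerivAt_id a).add_const b); exact this
  have hG : HasDerivAt (fun s : ℝ => Real.Gamma s * Real.Gamma b / Real.Gamma (s + b))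
      ((deriv Real.Gamma a * Real.Gamma b * Real.Gamma (a + b)
        - Real.Gamma a * Real.Gamma b * (deriv Real.Gamma (a + b) * 1))
        / Real.Gamma (a + b) ^ 2) a :=
    (hGa.mul_const (Real.Gamma b)).div hcomp hΓab.ne'
  have hev : (fun s : ℝ => ∫ x in (0:ℝ)..1, x ^ (s - 1) * (1 - x) ^ (b - 1))
      =ᶠ[nhds a] (fun s => Real.Gamma s * Real.Gamma b / Real.Gamma (s + b)) := by
    filter_upwards [eventually_gt_nhds ha] with s hs
    exact beta_eval hs hb
  have hI : HasDerivAt (fun s : ℝ => Real.Gamma s * Real.Gamma b / Real.Gamma (s + b))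
      (∫ x in (0:ℝ)..1, Real.log x * (x ^ (a - 1) * (1 - x) ^ (b - 1))) a :=
    (beta_hasDeriv ha hb).congr_of_eventuallyEq hev.symm
  have hJ : ∫ x in (0:ℝ)..1, Real.log x * (x ^ (a - 1) * (1 - x) ^ (b - 1))
      = (deriv Real.Gamma a * Real.Gamma b * Real.Gamma (a + b)
        - Real.Gamma a * Real.Gamma b * (deriv Real.Gamma (a + b) * 1))
        / Real.Gamma (a + b) ^ 2 := hI.unique hG
  -- digamma as logarithmic derivative
  have hdig : ∀ {s : ℝ}, 0 < s → digamma s = deriv Real.Gamma s / Real.Gamma s := by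
    intro s hs
    have h := hdΓ hs
    unfold digamma
    rw [deriv.log h.differentiableAt (Real.Gamma_pos_of_pos hs).ne']
  have hBinv : B⁻¹ = Real.Gamma (a + b) / (Real.Gamma a * Real.Gamma b) := by
    rw [hBdef, inv_div]
  rw [step1, step2, step3, hJ, hdig ha, hdig (show (0:ℝ) < a + b by linarith), hBinv]
  field_simp
end
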